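/- Let Y be a real Banach space, X a real vector space, and g : X → Y a map satisfying ‖g(2x) − 4g(x)‖ ≤ ε for all x ∈ X and some ε ≥ 0. Then there exists a unique map Q : X → Y with Q(2x) = 4Q(x) for all x and ‖g(x) − Q(x)‖ ≤ ε/3 for all x ∈ X; Q is given by Q(x) = lim_{n→∞} g(2ⁿx)/4ⁿ. -/

import Mathlib

theorem stmt_13 {X Y : Type*} [AddCommGroup X] [Module ℝ X]
    [NormedAddCommGroup Y] [NormedSpace ℝ Y] [CompleteSpace Y]
    (g : X → Y) (ε : ℝ) (hε : 0 ≤ ε)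
    (hg : ∀ x : X, ‖g ((2:ℝ) • x) - (4:ℝ) • g x‖ ≤ ε) :
    ∃! Q : X → Y,
      (∀ x : X, Q ((2:ℝ) • x) = (4:ℝ) • Q x) ∧
      (∀ x : X, ‖g x - Q x‖ ≤ ε / 3) ∧
      (∀ x : X, Filter.Tendsto (fun n : ℕ => ((4:ℝ)^n)⁻¹ • g (((2:ℝ)^n) • x))
        Filter.atTop (nhds (Q x))) := by
  set a : X → ℕ → Y := fun x n => ((4:ℝ)^n)⁻¹ • g (((2:ℝ)^n) • x) with ha
  have hstep : ∀ x n, dist (a x n) (a x (n+1)) ≤ (ε/4) * (1/4)^n := by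
    intro x n
    have h1 : a x (n+1) - a x n
        = ((4:ℝ)^(n+1))⁻¹ • (g (((2:ℝ)^n) • ((2:ℝ) • x)) - (4:ℝ) • g (((2:ℝ)^n) • x)) := by
      simp only [ha, smul_sub, smul_smul]
      rw [show ((2:ℝ)^n * 2) = (2:ℝ)^(n+1) by rw [pow_succ],
          show ((4:ℝ)^(n+1))⁻¹ * 4 = ((4:ℝ)^n)⁻¹ by rw [pow_succ]; field_simp]
    rw [dist_eq_norm', h1, norm_smul]
    have h2 : ‖((4:ℝ)^(n+1))⁻¹‖ = ((4:ℝ)^(n+1))⁻¹ := by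
      rw [Real.norm_eq_abs, abs_of_pos]; positivity
    rw [h2]
    calc ((4:ℝ)^(n+1))⁻¹ * ‖g (((2:ℝ)^n) • ((2:ℝ) • x)) - (4:ℝ) • g (((2:ℝ)^n) • x)‖
        ≤ ((4:ℝ)^(n+1))⁻¹ * ε := by
          refine mul_le_mul_of_nonneg_left ?_ (by positivity)
          have := hg (((2:ℝ)^n) • x)
          rwa [smul_comm] at this
      _ = (ε/4) * (1/4)^n := by
          rw [pow_succ, one_div, inv_pow]; ring
  have hC : ∀ x, CauchySeq (a x) := fun x =>
    cauchySeq_of_le_geometric (1/4) (ε/4) (by norm_num) (hstep x)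
  have hL : ∀ x, ∃ L, Filter.Tendsto (a x) Filter.atTop (nhds L) :=
    fun x => cauchySeq_tendsto_of_complete (hC x)
  choose Q hQ using hL
  have ha0 : ∀ x, a x 0 = g x := by intro x; simp [ha]
  refine ⟨Q, ⟨?_, ?_, fun x => hQ x⟩, ?_⟩
  · intro x
    have key : a ((2:ℝ) • x) = fun n => (4:ℝ) • a x (n+1) := by
      funext n
      simp only [ha, smul_smul]
      rw [show ((2:ℝ)^n * 2) = (2:ℝ)^(n+1) by rw [pow_succ],
          show ((4:ℝ) * ((4:ℝ)^(n+1))⁻¹) = ((4:ℝ)^n)⁻¹ by rw [pow_succ]; field_simp]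
    have h1 : Filter.Tendsto (fun n => a x (n+1)) Filter.atTop (nhds (Q x)) :=
      (hQ x).comp (Filter.tendsto_add_atTop_nat 1)
    have h2 : Filter.Tendsto (a ((2:ℝ) • x)) Filter.atTop (nhds ((4:ℝ) • Q x)) := by
      rw [key]; exact h1.const_smul (4:ℝ)
    exact tendsto_nhds_unique (hQ ((2:ℝ) • x)) h2
  · intro x
    have := dist_le_of_le_geometric_of_tendsto₀ (1/4) (ε/4) (by norm_num) (hstep x) (hQ x)
    rw [ha0 x, dist_eq_norm] at this
    calc ‖g x - Q x‖ ≤ (ε/4) / (1 - 1/4) := this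
      _ = ε / 3 := by ring
  · rintro Q' ⟨_, _, h3⟩
    funext x
    exact tendsto_nhds_unique (h3 x) (hQ x)
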